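/- For positive integers n and t, Schmidt 3-partitions of n with 3t or 3t−1 parts are equinumerous with triples (α, β, γ) of partitions with |α| + |β| + |γ| = n where α is a partition of length t with adjacent parts differing by at least 2, β is a strict partition of length t, and γ is a partition of length at most t. -/

import Mathlib

/-- `l` is a partition: a weakly decreasing list of positive integers. -/
def IsPartition (l : List ℕ) : Prop :=
  l.Pairwise (· ≥ ·) ∧ ∀ x ∈ l, 0 < x

/-- `l` is a strict partition: a strictly decreasing list of positive integers. -/
def IsStrict (l : List ℕ) : Prop :=
  l.Pairwise (· > ·) ∧ ∀ x ∈ l, 0 < x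

/-- Sum of the parts of `l` in positions `1, k+1, 2k+1, …` (0-indexed `0, k, 2k, …`). -/
def schmidtSum (k : ℕ) (l : List ℕ) : ℕ :=
  ∑ i ∈ Finset.range l.length, if i % k = 0 then l.getD i 0 else 0

/-- `l` is a 2-distinct partition: adjacent parts differ by at least 2, all parts positive. -/
def Is2Distinct (l : List ℕ) : Prop :=
  l.Chain' (fun a b => b + 2 ≤ a) ∧ ∀ x ∈ l, 0 < x


namespace SchmidtAux

lemma tele (w : ℕ → ℕ) (hw : ∀ m, w (m+1) ≤ w m) (i : ℕ) :
    ∀ t, i ≤ t → ∑ m ∈ Finset.Ico i t, (w m - w (m+1)) = w i - w t := by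
  have hmono : ∀ a b, a ≤ b → w b ≤ w a := fun a b h =>
    (antitone_nat_of_succ_le hw) h
  intro t
  induction t with
  | zero => intro h; interval_cases i; simp
  | succ t ih =>
    intro h
    rcases Nat.lt_or_ge i (t+1) with h' | h'
    · have hit : i ≤ t := by omega
      rw [Finset.sum_Ico_succ_top hit, ih hit]
      have h1 := hw t
      have h2 := hmono i t hit
      omega
    · have : i = t + 1 := by omega
      subst this; simp

lemma lt_of_adj (g : ℕ → ℕ) (L : ℕ) (h : ∀ m, m + 1 < L → g (m+1) < g m) :
    ∀ i j, i < j → j < L → g j < g i := by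
  intro i j
  induction j with
  | zero => omega
  | succ j ih =>
    intro hij hj
    rcases Nat.lt_or_ge i j with h' | h'
    · exact lt_trans (h j hj) (ih h' (by omega))
    · have hij' : i = j := by omega
      exact hij' ▸ h j hj

lemma sum_mod3 (F : ℕ → ℕ) : ∀ t : ℕ,
    ∑ i ∈ Finset.range (3*t), (if i % 3 = 0 then F i else 0) = ∑ j ∈ Finset.range t, F (3*j) := by
  intro t
  induction t with
  | zero => simp
  | succ t ih =>
    have h3 : 3*(t+1) = (3*t) + 1 + 1 + 1 := by ring
    rw [h3, Finset.sum_range_succ, Finset.sum_range_succ, Finset.sum_range_succ,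
      Finset.sum_range_succ, ih]
    have e0 : (3*t) % 3 = 0 := by omega
    rw [if_pos e0, if_neg (by omega : ¬ (3*t+1) % 3 = 0), if_neg (by omega : ¬ (3*t+1+1) % 3 = 0)]
    omega

lemma getD_ofFn {t : ℕ} (f : Fin t → ℕ) (i : ℕ) :
    (List.ofFn f).getD i 0 = if h : i < t then f ⟨i, h⟩ else 0 := by
  split_ifs with h
  · rw [List.getD_eq_getElem _ _ (by simpa using h), List.getElem_ofFn]
  · exact List.getD_eq_default _ _ (by simpa using h)

lemma ofFn_getD_eq_append {t : ℕ} (l : List ℕ) (hl : l.length ≤ t) :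
    (List.ofFn (fun i : Fin t => l.getD i 0)) = l ++ List.replicate (t - l.length) 0 := by
  apply List.ext_getElem
  · simp; omega
  · intro n h1 h2
    rw [List.getElem_ofFn]
    rcases Nat.lt_or_ge n l.length with h | h
    · rw [List.getElem_append_left h, List.getD_eq_getElem _ _ h]
    · rw [List.getElem_append_right h, List.getD_eq_default _ _ h, List.getElem_replicate]

lemma filter_append_replicate (l : List ℕ) (k : ℕ) (hl : ∀ x ∈ l, 0 < x) :
    (l ++ List.replicate k 0).filter (fun x => x != 0) = l := by
  rw [List.filter_append]
  have h1 : l.filter (fun x => x != 0) = l := by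
    apply List.filter_eq_self.2
    intro a ha
    simpa using (hl a ha).ne'
  have h2 : (List.replicate k (0:ℕ)).filter (fun x => x != 0) = [] := by simp
  rw [h1, h2, List.append_nil]

lemma sum_getD (l : List ℕ) (t : ℕ) (hl : l.length ≤ t) :
    ∑ i ∈ Finset.range t, l.getD i 0 = l.sum := by
  calc ∑ i ∈ Finset.range t, l.getD i 0
      = (List.ofFn (fun i : Fin t => l.getD i 0)).sum := by
        rw [List.sum_ofFn, Finset.sum_range]
    _ = l.sum := by rw [ofFn_getD_eq_append l hl]; simp

lemma sorted_eq_filter_append (w : List ℕ) (hw : w.Pairwise (· ≥ ·)) :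
    w = w.filter (fun x => x != 0) ++
      List.replicate (w.length - (w.filter (fun x => x != 0)).length) 0 := by
  induction w with
  | nil => simp
  | cons a w ih =>
    rcases Nat.eq_zero_or_pos a with ha | ha
    · subst ha
      have hall : ∀ b ∈ (0:ℕ) :: w, b = 0 := by
        intro b hb
        rcases List.mem_cons.1 hb with h | h
        · exact h
        · have := (List.pairwise_cons.1 hw).1 b h
          omega
      have hf : ((0:ℕ) :: w).filter (fun x => x != 0) = [] := by
        rw [List.filter_eq_nil_iff]
        intro a ha
        simp [hall a ha]
      rw [hf]
      simp only [List.nil_append, List.length_nil, Nat.sub_zero]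
      exact List.eq_replicate_iff.2 ⟨rfl, hall⟩
    · have hf : (a :: w).filter (fun x => x != 0) = a :: w.filter (fun x => x != 0) := by
        rw [List.filter_cons_of_pos (by simpa using ha.ne')]
      rw [hf]
      simp only [List.length_cons, Nat.succ_sub_succ, List.cons_append]
      exact congrArg (a :: ·) (ih (List.pairwise_cons.1 hw).2)

/-- getD is unchanged by zero-padding -/
lemma getD_append_replicate (l : List ℕ) (k i : ℕ) :
    (l ++ List.replicate k 0).getD i 0 = l.getD i 0 := by
  rcases Nat.lt_or_ge i l.length with h | h
  · rw [List.getD_eq_getElem _ _ h, List.getD_eq_getElem _ _ (by simp; omega),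
      List.getElem_append_left h]
  · rw [List.getD_eq_default _ _ h]
    rcases Nat.lt_or_ge i (l.length + k) with h2 | h2
    · rw [List.getD_eq_getElem _ _ (by simp; omega), List.getElem_append_right h,
        List.getElem_replicate]
    · rw [List.getD_eq_default _ _ (by simp; omega)]


def Mem (t n : ℕ) (v : ℕ → ℕ) : Prop :=
  (∀ m, m + 1 < 3*t → v (m+1) < v m) ∧ (∀ m, 3*t ≤ m → v m = 0) ∧
    ∑ i ∈ Finset.range t, v (3*i) = n

def SA (t : ℕ) (v : ℕ → ℕ) (i : ℕ) : ℕ := ∑ m ∈ Finset.Ico i t, (v (3*m) - v (3*m+1))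
def SB (t : ℕ) (v : ℕ → ℕ) (i : ℕ) : ℕ := ∑ m ∈ Finset.Ico i t, (v (3*m+1) - v (3*m+2))
def SC (t : ℕ) (v : ℕ → ℕ) (i : ℕ) : ℕ := ∑ m ∈ Finset.Ico i t, (v (3*m+2) - v (3*m+3))

section
variable (t n : ℕ) (v : ℕ → ℕ)

lemma Mem.anti (hv : Mem t n v) : ∀ a b, a ≤ b → v b ≤ v a := by
  apply antitone_nat_of_succ_le
  intro m
  rcases Nat.lt_or_ge (m+1) (3*t) with h | h
  · exact le_of_lt (hv.1 m h)
  · rw [hv.2.1 (m+1) h]; omega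

lemma SA_empty (i : ℕ) (h : t ≤ i) : SA t v i = 0 := by
  unfold SA; rw [Finset.Ico_eq_empty (by omega)]; rfl
lemma SB_empty (i : ℕ) (h : t ≤ i) : SB t v i = 0 := by
  unfold SB; rw [Finset.Ico_eq_empty (by omega)]; rfl
lemma SC_empty (i : ℕ) (h : t ≤ i) : SC t v i = 0 := by
  unfold SC; rw [Finset.Ico_eq_empty (by omega)]; rfl

lemma SA_rec (i : ℕ) (h : i < t) :
    SA t v i = (v (3*i) - v (3*i+1)) + SA t v (i+1) :=
  Finset.sum_eq_sum_Ico_succ_bot h _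
lemma SB_rec (i : ℕ) (h : i < t) :
    SB t v i = (v (3*i+1) - v (3*i+2)) + SB t v (i+1) :=
  Finset.sum_eq_sum_Ico_succ_bot h _
lemma SC_rec (i : ℕ) (h : i < t) :
    SC t v i = (v (3*i+2) - v (3*i+3)) + SC t v (i+1) :=
  Finset.sum_eq_sum_Ico_succ_bot h _

lemma P_eq (hv : Mem t n v) : ∀ i, SA t v i + SB t v i + SC t v i = v (3*i) := by
  intro i
  rcases Nat.lt_or_ge i t with h | h
  · have hmono := hv.anti t n
    unfold SA SB SC
    rw [← Finset.sum_add_distrib, ← Finset.sum_add_distrib]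
    have hcongr : ∀ m ∈ Finset.Ico i t,
        (v (3*m) - v (3*m+1)) + (v (3*m+1) - v (3*m+2)) + (v (3*m+2) - v (3*m+3))
          = (fun m => v (3*m)) m - (fun m => v (3*m)) (m+1) := by
      intro m _
      have h1 := hmono (3*m) (3*m+1) (by omega)
      have h2 := hmono (3*m+1) (3*m+2) (by omega)
      have h3 := hmono (3*m+2) (3*m+3) (by omega)
      simp only
      have : 3*(m+1) = 3*m+3 := by ring
      rw [this]
      omega
    rw [Finset.sum_congr rfl hcongr,
      tele (fun m => v (3*m)) (fun m => by
        exact hmono (3*m) (3*(m+1)) (by omega)) i t (le_of_lt h)]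
    have h0 : v (3*t) = 0 := hv.2.1 _ (le_refl _)
    omega
  · rw [SA_empty t v i h, SB_empty t v i h, SC_empty t v i h, hv.2.1 _ (by omega)]

lemma Q1_eq (hv : Mem t n v) : ∀ i, SA t v (i+1) + SB t v i + SC t v i = v (3*i+1) := by
  intro i
  rcases Nat.lt_or_ge i t with h | h
  · have hmono := hv.anti t n
    have hP := P_eq t n v hv (i+1)
    have h31 : 3*(i+1) = 3*i+3 := by ring
    rw [h31] at hP
    have hB := SB_rec t v i h
    have hC := SC_rec t v i h
    have h1 := hmono (3*i+1) (3*i+2) (by omega)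
    have h2 := hmono (3*i+2) (3*i+3) (by omega)
    omega
  · rw [SA_empty t v (i+1) (by omega), SB_empty t v i h, SC_empty t v i h,
      hv.2.1 _ (by omega)]

lemma Q2_eq (hv : Mem t n v) : ∀ i, SA t v (i+1) + SB t v (i+1) + SC t v i = v (3*i+2) := by
  intro i
  rcases Nat.lt_or_ge i t with h | h
  · have hmono := hv.anti t n
    have hP := P_eq t n v hv (i+1)
    have h31 : 3*(i+1) = 3*i+3 := by ring
    rw [h31] at hP
    have hC := SC_rec t v i h
    have h2 := hmono (3*i+2) (3*i+3) (by omega)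
    omega
  · rw [SA_empty t v (i+1) (by omega), SB_empty t v (i+1) (by omega), SC_empty t v i h,
      hv.2.1 _ (by omega)]

lemma SA_ge1 (hv : Mem t n v) (i : ℕ) (h : i < t) : 1 ≤ SA t v i := by
  have := SA_rec t v i h
  have h1 := hv.1 (3*i) (by omega)
  omega

lemma SB_ge1 (hv : Mem t n v) (i : ℕ) (h : i < t) : 1 ≤ SB t v i := by
  have := SB_rec t v i h
  have h1 := hv.1 (3*i+1) (by omega)
  rw [show 3*i+1+1 = 3*i+2 by omega] at h1
  omega

lemma SC_ge (hv : Mem t n v) (i : ℕ) : t - 1 - i ≤ SC t v i := by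
  rcases Nat.lt_or_ge i t with h | h
  swap
  · have : t - 1 - i = 0 := by omega
    omega
  have hsub : Finset.Ico i (t-1) ⊆ Finset.Ico i t := by
    apply Finset.Ico_subset_Ico (le_refl _) (by omega)
  have hcard : (Finset.Ico i (t-1)).card = t - 1 - i := by
    rw [Nat.card_Ico]
  calc t - 1 - i = ∑ m ∈ Finset.Ico i (t-1), 1 := by
        rw [Finset.sum_const, smul_eq_mul, mul_one, hcard]
    _ ≤ ∑ m ∈ Finset.Ico i (t-1), (v (3*m+2) - v (3*m+3)) := by
        apply Finset.sum_le_sum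
        intro m hm
        rw [Finset.mem_Ico] at hm
        have := hv.1 (3*m+2) (by omega)
        rw [show 3*m+2+1 = 3*m+3 by omega] at this
        omega
    _ ≤ SC t v i := by
        apply Finset.sum_le_sum_of_subset hsub

end


def Phi (t : ℕ) (v : ℕ → ℕ) : List ℕ × List ℕ × List ℕ :=
  (List.ofFn (fun i : Fin t => SA t v i + (t - 1 - i)),
   List.ofFn (fun i : Fin t => SB t v i),
   (List.ofFn (fun i : Fin t => SC t v i - (t - 1 - i))).filter (fun x => x != 0))

lemma ge_of_adj (g : ℕ → ℕ) (L : ℕ) (h : ∀ m, m + 1 < L → g (m+1) ≤ g m) :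
    ∀ i j, i ≤ j → j < L → g j ≤ g i := by
  intro i j
  induction j with
  | zero => intro h1 _; interval_cases i; rfl
  | succ j ih =>
    intro hij hj
    rcases Nat.lt_or_ge i (j+1) with h' | h'
    · exact le_trans (h j hj) (ih (by omega) (by omega))
    · have hij' : i = j+1 := by omega
      rw [hij']

lemma gamma_sorted (t n : ℕ) (v : ℕ → ℕ) (hv : Mem t n v) :
    (List.ofFn fun i : Fin t => SC t v i - (t - 1 - i)).Pairwise (· ≥ ·) := by
    rw [List.pairwise_iff_getElem]
    intro i j hi hj hij
    simp only [List.length_ofFn] at hi hj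
    simp only [List.getElem_ofFn]
    refine ge_of_adj (fun m => SC t v m - (t - 1 - m)) t ?_ i j (by omega) hj
    intro m hm
    show SC t v (m+1) - (t - 1 - (m+1)) ≤ SC t v m - (t - 1 - m)
    have hrec := SC_rec t v m (by omega)
    have h1 := hv.1 (3*m+2) (by omega)
    rw [show 3*m+2+1 = 3*m+3 by omega] at h1
    have h2 := SC_ge t n v hv (m+1)
    omega

lemma phi_mem (t n : ℕ) (ht : 1 ≤ t) (v : ℕ → ℕ) (hv : Mem t n v) :
    Is2Distinct (Phi t v).1 ∧ (Phi t v).1.length = t ∧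
      IsStrict (Phi t v).2.1 ∧ (Phi t v).2.1.length = t ∧
      IsPartition (Phi t v).2.2 ∧ (Phi t v).2.2.length ≤ t ∧
      (Phi t v).1.sum + (Phi t v).2.1.sum + (Phi t v).2.2.sum = n := by
  unfold Phi
  simp only
  refine ⟨⟨?_, ?_⟩, by simp, ⟨?_, ?_⟩, by simp, ⟨?_, ?_⟩, ?_, ?_⟩
  · -- chain' of alpha
    rw [List.Chain', List.isChain_iff_getElem]
    intro i hi
    simp only [List.length_ofFn] at hi
    simp only [List.getElem_ofFn]
    have hrec := SA_rec t v i (by omega)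
    have h1 := hv.1 (3*i) (by omega)
    rw [show 3*i+1 = 3*i+1 by rfl] at h1
    omega
  · -- positivity of alpha
    intro x hx
    rw [List.mem_ofFn] at hx
    obtain ⟨i, rfl⟩ := hx
    have := SA_ge1 t n v hv i i.isLt
    show 0 < SA t v (i:ℕ) + (t - 1 - (i:ℕ))
    omega
  · -- sorted of beta
    rw [List.pairwise_iff_getElem]
    intro i j hi hj hij
    simp only [List.length_ofFn] at hi hj
    simp only [List.getElem_ofFn]
    refine lt_of_adj (fun m => SB t v m) t ?_ i j hij hj
    intro m hm
    show SB t v (m+1) < SB t v m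
    have hrec := SB_rec t v m (by omega)
    have h1 := hv.1 (3*m+1) (by omega)
    rw [show 3*m+1+1 = 3*m+2 by omega] at h1
    omega
  · -- positivity of beta
    intro x hx
    rw [List.mem_ofFn] at hx
    obtain ⟨i, rfl⟩ := hx
    have := SB_ge1 t n v hv i i.isLt
    show 0 < SB t v (i:ℕ)
    omega
  · -- sorted of gamma
    apply List.Pairwise.sublist List.filter_sublist
    rw [List.pairwise_iff_getElem]
    intro i j hi hj hij
    simp only [List.length_ofFn] at hi hj
    simp only [List.getElem_ofFn]
    refine ge_of_adj (fun m => SC t v m - (t - 1 - m)) t ?_ i j (by omega) hj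
    intro m hm
    show SC t v (m+1) - (t - 1 - (m+1)) ≤ SC t v m - (t - 1 - m)
    have hrec := SC_rec t v m (by omega)
    have h1 := hv.1 (3*m+2) (by omega)
    rw [show 3*m+2+1 = 3*m+3 by omega] at h1
    have h2 := SC_ge t n v hv (m+1)
    omega
  · -- positivity of gamma
    intro x hx
    rw [List.mem_filter] at hx
    have := hx.2
    simp only [bne_iff_ne, ne_eq] at this
    omega
  · -- length of gamma
    calc ((List.ofFn fun i : Fin t => SC t v i - (t - 1 - i)).filter (fun x => x != 0)).length
        ≤ (List.ofFn fun i : Fin t => SC t v i - (t - 1 - i)).length :=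
          List.length_filter_le _ _
      _ = t := by simp
  · -- total sum
    have hγ : ((List.ofFn fun i : Fin t => SC t v i - (t - 1 - i)).filter (fun x => x != 0)).sum
        = (List.ofFn fun i : Fin t => SC t v i - (t - 1 - i)).sum := by
      set w := List.ofFn fun i : Fin t => SC t v i - (t - 1 - i) with hw
      have hsorted : w.Pairwise (· ≥ ·) := by
        rw [List.pairwise_iff_getElem]
        intro i j hi hj hij
        simp only [hw, List.length_ofFn] at hi hj
        simp only [hw, List.getElem_ofFn]
        refine ge_of_adj (fun m => SC t v m - (t - 1 - m)) t ?_ i j (by omega) hj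
        intro m hm
        show SC t v (m+1) - (t - 1 - (m+1)) ≤ SC t v m - (t - 1 - m)
        have hrec := SC_rec t v m (by omega)
        have h1 := hv.1 (3*m+2) (by omega)
        rw [show 3*m+2+1 = 3*m+3 by omega] at h1
        have h2 := SC_ge t n v hv (m+1)
        omega
      conv_rhs => rw [sorted_eq_filter_append w hsorted]
      rw [List.sum_append]
      simp
    rw [hγ]
    rw [List.sum_ofFn, List.sum_ofFn, List.sum_ofFn]
    rw [← Finset.sum_range (fun i => SA t v i + (t - 1 - i)),
      ← Finset.sum_range (fun i => SB t v i),
      ← Finset.sum_range (fun i => SC t v i - (t - 1 - i))]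
    rw [← Finset.sum_add_distrib, ← Finset.sum_add_distrib]
    have : ∀ i ∈ Finset.range t,
        (SA t v i + (t - 1 - i)) + SB t v i + (SC t v i - (t - 1 - i)) = v (3*i) := by
      intro i hi
      have hP := P_eq t n v hv i
      have hC := SC_ge t n v hv i
      omega
    rw [Finset.sum_congr rfl this]
    exact hv.2.2


def Aa (t : ℕ) (p : List ℕ × List ℕ × List ℕ) (i : ℕ) : ℕ := p.1.getD i 0 - (t - 1 - i)
def Bb (p : List ℕ × List ℕ × List ℕ) (i : ℕ) : ℕ := p.2.1.getD i 0
def Cc (t : ℕ) (p : List ℕ × List ℕ × List ℕ) (i : ℕ) : ℕ := p.2.2.getD i 0 + (t - 1 - i)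

def Gf (t : ℕ) (p : List ℕ × List ℕ × List ℕ) (j : ℕ) : ℕ :=
  (if j % 3 = 0 then Aa t p (j/3) else Aa t p (j/3 + 1))
  + (if j % 3 = 2 then Bb p (j/3 + 1) else Bb p (j/3))
  + Cc t p (j/3)

lemma Aa_phi (t n : ℕ) (v : ℕ → ℕ) (hv : Mem t n v) (i : ℕ) :
    Aa t (Phi t v) i = SA t v i := by
  unfold Aa Phi
  simp only
  rw [getD_ofFn]
  split_ifs with h
  · simp only [Fin.val_mk]
    omega
  · rw [SA_empty t v i (by omega)]
    omega

lemma Bb_phi (t n : ℕ) (v : ℕ → ℕ) (hv : Mem t n v) (i : ℕ) :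
    Bb (Phi t v) i = SB t v i := by
  unfold Bb Phi
  simp only
  rw [getD_ofFn]
  split_ifs with h
  · rfl
  · rw [SB_empty t v i (by omega)]

lemma Cc_phi (t n : ℕ) (v : ℕ → ℕ) (hv : Mem t n v) (i : ℕ) :
    Cc t (Phi t v) i = SC t v i := by
  unfold Cc Phi
  simp only
  have hw := sorted_eq_filter_append _ (gamma_sorted t n v hv)
  have : ((List.ofFn fun i : Fin t => SC t v i - (t - 1 - i)).filter
      (fun x => x != 0)).getD i 0
      = (List.ofFn fun i : Fin t => SC t v i - (t - 1 - i)).getD i 0 := by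
    conv_rhs => rw [hw]
    rw [getD_append_replicate]
  rw [this, getD_ofFn]
  split_ifs with h
  · simp only [Fin.val_mk]
    have := SC_ge t n v hv i
    omega
  · rw [SC_empty t v i (by omega)]
    omega

lemma left_inv (t n : ℕ) (v : ℕ → ℕ) (hv : Mem t n v) : Gf t (Phi t v) = v := by
  funext j
  have hdm := Nat.div_add_mod j 3
  have hr : j % 3 = 0 ∨ j % 3 = 1 ∨ j % 3 = 2 := by omega
  unfold Gf
  rcases hr with hr | hr | hr
  · rw [if_pos hr, if_neg (by omega), Aa_phi t n v hv, Bb_phi t n v hv, Cc_phi t n v hv,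
      P_eq t n v hv (j/3), show 3*(j/3) = j by omega]
  · rw [if_neg (by omega), if_neg (by omega), Aa_phi t n v hv, Bb_phi t n v hv,
      Cc_phi t n v hv, Q1_eq t n v hv (j/3), show 3*(j/3)+1 = j by omega]
  · rw [if_neg (by omega), if_pos hr, Aa_phi t n v hv, Bb_phi t n v hv,
      Cc_phi t n v hv, Q2_eq t n v hv (j/3), show 3*(j/3)+2 = j by omega]


/-- lower bound for chains with gap k -/
lemma chain_bound (k : ℕ) (l : List ℕ) (hc : l.Chain' (fun a b => b + k ≤ a))
    (hp : ∀ x ∈ l, 0 < x) : ∀ d i, i + d + 1 = l.length → 1 + k * d ≤ l.getD i 0 := by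
  intro d
  induction d with
  | zero =>
    intro i hi
    have h : i < l.length := by omega
    rw [List.getD_eq_getElem _ _ h]
    have := hp _ (List.getElem_mem h)
    omega
  | succ d ih =>
    intro i hi
    have h : i < l.length := by omega
    have h1 : i + 1 < l.length := by omega
    have hadj := List.isChain_iff_getElem.1 hc i (by omega)
    have hih := ih (i+1) (by omega)
    rw [List.getD_eq_getElem _ _ h1] at hih
    rw [List.getD_eq_getElem _ _ h]
    calc 1 + k * (d+1) = (1 + k * d) + k := by ring
      _ ≤ l[i+1] + k := by omega
      _ ≤ l[i] := hadj

lemma Gf0 (t : ℕ) (b : List ℕ × List ℕ × List ℕ) (i : ℕ) : Gf t b (3*i) = Aa t b i + Bb b i + Cc t b i := by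
  unfold Gf
  have h0 : (3*i) % 3 = 0 := by omega
  have h1 : (3*i) / 3 = i := by omega
  rw [h0, h1, if_pos rfl, if_neg (by omega)]

lemma Gf1 (t : ℕ) (b : List ℕ × List ℕ × List ℕ) (i : ℕ) : Gf t b (3*i+1) = Aa t b (i+1) + Bb b i + Cc t b i := by
  unfold Gf
  have h0 : (3*i+1) % 3 = 1 := by omega
  have h1 : (3*i+1) / 3 = i := by omega
  rw [h0, h1, if_neg (by omega), if_neg (by omega)]

lemma Gf2 (t : ℕ) (b : List ℕ × List ℕ × List ℕ) (i : ℕ) : Gf t b (3*i+2) = Aa t b (i+1) + Bb b (i+1) + Cc t b i := by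
  unfold Gf
  have h0 : (3*i+2) % 3 = 2 := by omega
  have h1 : (3*i+2) / 3 = i := by omega
  rw [h0, h1, if_neg (by omega), if_pos rfl]

section Bside

variable (t n : ℕ) (b : List ℕ × List ℕ × List ℕ)
  (hb : Is2Distinct b.1 ∧ b.1.length = t ∧
    IsStrict b.2.1 ∧ b.2.1.length = t ∧
    IsPartition b.2.2 ∧ b.2.2.length ≤ t ∧
    b.1.sum + b.2.1.sum + b.2.2.sum = n)

include hb

lemma b_alpha_bound : ∀ i, i < t → 1 + 2 * (t - 1 - i) ≤ b.1.getD i 0 := by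
  intro i hi
  exact chain_bound 2 b.1 hb.1.1 hb.1.2 (t - 1 - i) i (by omega)

lemma b_beta_bound : ∀ i, i < t → 1 + 1 * (t - 1 - i) ≤ b.2.1.getD i 0 := by
  intro i hi
  have hc : b.2.1.Chain' (fun a b => b + 1 ≤ a) :=
    List.IsChain.imp (fun a b h => by omega) hb.2.2.1.1.isChain
  exact chain_bound 1 b.2.1 hc hb.2.2.1.2 (t - 1 - i) i (by omega)

lemma b_alpha_cons : ∀ m, m + 1 < t → b.1.getD (m+1) 0 + 2 ≤ b.1.getD m 0 := by
  intro m hm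
  have h1 : m + 1 < b.1.length := by omega
  have hadj := List.isChain_iff_getElem.1 hb.1.1 m (by omega)
  rw [List.getD_eq_getElem _ _ h1, List.getD_eq_getElem _ _ (by omega)]
  exact hadj

lemma b_beta_cons : ∀ m, m + 1 < t → b.2.1.getD (m+1) 0 + 1 ≤ b.2.1.getD m 0 := by
  intro m hm
  have h1 : m + 1 < b.2.1.length := by omega
  have hadj := List.pairwise_iff_getElem.1 hb.2.2.1.1 m (m+1) (by omega) h1 (by omega)
  rw [List.getD_eq_getElem _ _ h1, List.getD_eq_getElem _ _ (by omega)]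
  omega

lemma b_gamma_anti : ∀ m, b.2.2.getD (m+1) 0 ≤ b.2.2.getD m 0 := by
  intro m
  rcases Nat.lt_or_ge (m+1) b.2.2.length with h | h
  · have hadj := List.pairwise_iff_getElem.1 hb.2.2.2.2.1.1 m (m+1) (by omega) h (by omega)
    rw [List.getD_eq_getElem _ _ h, List.getD_eq_getElem _ _ (by omega)]
    exact hadj
  · rw [List.getD_eq_default _ _ h]
    omega

lemma b_def0 : ∀ i, t ≤ i → b.1.getD i 0 = 0 ∧ b.2.1.getD i 0 = 0 ∧ b.2.2.getD i 0 = 0 := by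
  intro i hi
  exact ⟨List.getD_eq_default _ _ (by omega), List.getD_eq_default _ _ (by omega),
    List.getD_eq_default _ _ (by omega)⟩

lemma Aa_lt : ∀ m, m + 1 ≤ t → Aa t b (m+1) < Aa t b m := by
  intro m hm
  unfold Aa
  rcases Nat.lt_or_ge (m+1) t with h | h
  · have h1 := b_alpha_cons t n b hb m h
    have h2 := b_alpha_bound t n b hb (m+1) h
    omega
  · have ht1 : m + 1 = t := by omega
    have h1 := (b_def0 t n b hb (m+1) (by omega)).1
    have h2 := b_alpha_bound t n b hb m (by omega)
    omega

lemma Aa_anti : ∀ m, Aa t b (m+1) ≤ Aa t b m := by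
  intro m
  rcases Nat.lt_or_ge m t with h | h
  · exact le_of_lt (Aa_lt t n b hb m (by omega))
  · unfold Aa
    rw [(b_def0 t n b hb m h).1, (b_def0 t n b hb (m+1) (by omega)).1]
    omega

lemma Bb_lt : ∀ m, m + 1 ≤ t → Bb b (m+1) < Bb b m := by
  intro m hm
  unfold Bb
  rcases Nat.lt_or_ge (m+1) t with h | h
  · have h1 := b_beta_cons t n b hb m h
    omega
  · have h1 := (b_def0 t n b hb (m+1) (by omega)).2.1
    have h2 := b_beta_bound t n b hb m (by omega)
    omega

lemma Bb_anti : ∀ m, Bb b (m+1) ≤ Bb b m := by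
  intro m
  rcases Nat.lt_or_ge m t with h | h
  · exact le_of_lt (Bb_lt t n b hb m (by omega))
  · unfold Bb
    rw [(b_def0 t n b hb m h).2.1, (b_def0 t n b hb (m+1) (by omega)).2.1]

lemma Cc_lt : ∀ m, m + 1 < t → Cc t b (m+1) < Cc t b m := by
  intro m hm
  unfold Cc
  have h1 := b_gamma_anti t n b hb m
  omega

lemma Cc_anti : ∀ m, Cc t b (m+1) ≤ Cc t b m := by
  intro m
  unfold Cc
  have h1 := b_gamma_anti t n b hb m
  omega

lemma Cc_top : ∀ i, t ≤ i → Cc t b i = 0 := by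
  intro i hi
  unfold Cc
  rw [(b_def0 t n b hb i hi).2.2]
  omega

lemma gf_mem (ht : 1 ≤ t) : Mem t n (Gf t b) := by
  refine ⟨?_, ?_, ?_⟩
  · -- adjacent strict decrease
    intro j hj
    have hdm := Nat.div_add_mod j 3
    have hcase : j = 3*(j/3) ∨ j = 3*(j/3)+1 ∨ j = 3*(j/3)+2 := by omega
    obtain hr | hr | hr := hcase <;> rw [hr] at hj ⊢
    · rw [show 3*(j/3)+1 = 3*(j/3)+1 from rfl, Gf1, Gf0]
      have := Aa_lt t n b hb (j/3) (by omega)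
      omega
    · rw [show 3*(j/3)+1+1 = 3*(j/3)+2 by omega, Gf2, Gf1]
      have := Bb_lt t n b hb (j/3) (by omega)
      omega
    · rw [show 3*(j/3)+2+1 = 3*(j/3+1) by omega, Gf0, Gf2]
      have := Cc_lt t n b hb (j/3) (by omega)
      omega
  · -- support
    intro j hj
    have hdm := Nat.div_add_mod j 3
    have hd := b_def0 t n b hb
    have hcase : j = 3*(j/3) ∨ j = 3*(j/3)+1 ∨ j = 3*(j/3)+2 := by omega
    obtain hr | hr | hr := hcase <;> rw [hr] at hj ⊢
    · have hti : t ≤ j/3 := by omega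
      rw [Gf0]
      unfold Aa Bb
      rw [(hd _ hti).1, (hd _ hti).2.1, Cc_top t n b hb _ hti]
      omega
    · have hti : t ≤ j/3 := by omega
      rw [Gf1]
      unfold Aa Bb
      rw [(hd (j/3+1) (by omega)).1, (hd _ hti).2.1, Cc_top t n b hb _ hti]
      omega
    · have hti : t ≤ j/3 := by omega
      rw [Gf2]
      unfold Aa Bb
      rw [(hd (j/3+1) (by omega)).1, (hd (j/3+1) (by omega)).2.1, Cc_top t n b hb _ hti]
      omega
  · -- sum
    have : ∀ i ∈ Finset.range t, Gf t b (3*i)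
        = b.1.getD i 0 + b.2.1.getD i 0 + b.2.2.getD i 0 := by
      intro i hi
      rw [Finset.mem_range] at hi
      rw [Gf0]
      unfold Aa Bb Cc
      have := b_alpha_bound t n b hb i hi
      omega
    rw [Finset.sum_congr rfl this, Finset.sum_add_distrib, Finset.sum_add_distrib,
      sum_getD _ _ (by omega), sum_getD _ _ (by omega), sum_getD _ _ hb.2.2.2.2.2.1]
    exact hb.2.2.2.2.2.2

lemma SA_gf (i : ℕ) (hi : i ≤ t) : SA t (Gf t b) i = Aa t b i := by
  unfold SA
  have hp : ∀ m ∈ Finset.Ico i t,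
      Gf t b (3*m) - Gf t b (3*m+1) = Aa t b m - Aa t b (m+1) := by
    intro m _
    rw [Gf0, Gf1]
    omega
  rw [Finset.sum_congr rfl hp, tele (fun m => Aa t b m) (Aa_anti t n b hb) i t hi]
  unfold Aa
  rw [(b_def0 t n b hb t (le_refl t)).1]
  omega

lemma SB_gf (i : ℕ) (hi : i ≤ t) : SB t (Gf t b) i = Bb b i := by
  unfold SB
  have hp : ∀ m ∈ Finset.Ico i t,
      Gf t b (3*m+1) - Gf t b (3*m+2) = Bb b m - Bb b (m+1) := by
    intro m _
    rw [Gf1, Gf2]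
    omega
  rw [Finset.sum_congr rfl hp, tele (fun m => Bb b m) (Bb_anti t n b hb) i t hi]
  unfold Bb
  rw [(b_def0 t n b hb t (le_refl t)).2.1]
  omega

lemma SC_gf (i : ℕ) (hi : i ≤ t) : SC t (Gf t b) i = Cc t b i := by
  unfold SC
  have hp : ∀ m ∈ Finset.Ico i t,
      Gf t b (3*m+2) - Gf t b (3*m+3) = Cc t b m - Cc t b (m+1) := by
    intro m _
    have h3 : 3*m+3 = 3*(m+1) := by ring
    rw [Gf2, h3, Gf0]
    omega
  rw [Finset.sum_congr rfl hp, tele (fun m => Cc t b m) (Cc_anti t n b hb) i t hi,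
    Cc_top t n b hb t (le_refl t)]
  omega

lemma right_inv (ht : 1 ≤ t) : Phi t (Gf t b) = b := by
  unfold Phi
  have hα : (List.ofFn fun i : Fin t => SA t (Gf t b) i + (t - 1 - i)) = b.1 := by
    apply List.ext_getElem (by simp [hb.2.1])
    intro j h1 h2
    rw [List.getElem_ofFn]
    simp only [Fin.val_mk]
    rw [SA_gf t n b hb j (by omega)]
    unfold Aa
    have hbd := b_alpha_bound t n b hb j (by omega)
    rw [List.getD_eq_getElem _ _ h2] at hbd ⊢
    omega
  have hβ : (List.ofFn fun i : Fin t => SB t (Gf t b) i) = b.2.1 := by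
    apply List.ext_getElem (by simp [hb.2.2.2.1])
    intro j h1 h2
    rw [List.getElem_ofFn]
    simp only [Fin.val_mk]
    rw [SB_gf t n b hb j (by omega)]
    unfold Bb
    rw [List.getD_eq_getElem _ _ h2]
  have hγ : ((List.ofFn fun i : Fin t => SC t (Gf t b) i - (t - 1 - i)).filter
      (fun x => x != 0)) = b.2.2 := by
    have he : (fun i : Fin t => SC t (Gf t b) i - (t - 1 - i))
        = fun i : Fin t => b.2.2.getD i 0 := by
      funext i
      rw [SC_gf t n b hb i (le_of_lt i.isLt)]
      unfold Cc
      omega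
    rw [he, ofFn_getD_eq_append b.2.2 hb.2.2.2.2.2.1,
      filter_append_replicate _ _ hb.2.2.2.2.1.2]
  exact Prod.ext hα (Prod.ext hβ hγ)

end Bside

lemma schmidt_eq (l : List ℕ) (t : ℕ) (hl : l.length ≤ 3*t) :
    schmidtSum 3 l = ∑ i ∈ Finset.range t, l.getD (3*i) 0 := by
  rw [← sum_mod3 (fun i => l.getD i 0) t]
  unfold schmidtSum
  apply Finset.sum_subset (Finset.range_subset_range.2 hl)
  intro i _ hi
  rw [Finset.mem_range, not_lt] at hi
  split_ifs
  · exact List.getD_eq_default _ _ hi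
  · rfl

lemma psi_mem (n t : ℕ) (ht : 1 ≤ t) (l : List ℕ)
    (hs : IsStrict l) (hlen : l.length = 3*t ∨ l.length = 3*t-1)
    (hsum : schmidtSum 3 l = n) : Mem t n (fun m => l.getD m 0) := by
  have hlle : l.length ≤ 3*t := by omega
  refine ⟨?_, ?_, ?_⟩
  · intro m hm
    show l.getD (m+1) 0 < l.getD m 0
    rcases Nat.lt_or_ge (m+1) l.length with h | h
    · have hm' : m < l.length := by omega
      rw [List.getD_eq_getElem _ _ hm', List.getD_eq_getElem _ _ h]
      exact List.pairwise_iff_getElem.1 hs.1 m (m+1) hm' h (by omega)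
    · have hm' : m < l.length := by omega
      rw [List.getD_eq_getElem _ _ hm', List.getD_eq_default _ _ h]
      exact hs.2 _ (List.getElem_mem hm')
  · intro m hm
    exact List.getD_eq_default _ _ (by omega)
  · rw [← schmidt_eq l t hlle]; exact hsum

lemma cardA (n t : ℕ) (ht : 1 ≤ t) :
    Nat.card {l : List ℕ // IsStrict l ∧ (l.length = 3*t ∨ l.length = 3*t-1) ∧ schmidtSum 3 l = n}
      = Nat.card {v : ℕ → ℕ // Mem t n v} := by
  apply Nat.card_eq_of_bijective
    (f := fun l => ⟨fun m => l.1.getD m 0, psi_mem n t ht l.1 l.2.1 l.2.2.1 l.2.2.2⟩)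
  constructor
  · rintro ⟨l, hs, hlen, hsum⟩ ⟨l', hs', hlen', hsum'⟩ h
    have hD : ∀ m, l.getD m 0 = l'.getD m 0 := fun m =>
      congrFun (congrArg Subtype.val h) m
    have key : ∀ (L : List ℕ), IsStrict L → L.length = 3*t →
        0 < L.getD (3*t-1) 0 := by
      intro L hL hLen
      rw [List.getD_eq_getElem _ _ (by omega)]
      exact hL.2 _ (List.getElem_mem (by omega))
    have hlen0 : l.length = l'.length := by
      rcases hlen with h2 | h2 <;> rcases hlen' with h3 | h3
      · omega
      · have hx := hD (3*t-1)
        have hy := key l hs h2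
        rw [List.getD_eq_default l' _ (by omega)] at hx
        omega
      · have hx := hD (3*t-1)
        have hy := key l' hs' h3
        rw [List.getD_eq_default l _ (by omega)] at hx
        omega
      · omega
    apply Subtype.ext
    apply List.ext_getElem hlen0
    intro i h1 h2
    have := hD i
    rwa [List.getD_eq_getElem _ _ h1, List.getD_eq_getElem _ _ h2] at this
  · rintro ⟨v, hv1, hv2, hv3⟩
    have hadj : ∀ m, m + 1 < 3*t → v (m+1) < v m := hv1
    have hlt := lt_of_adj v (3*t) hadj
    -- the list: length 3t if v (3t-1) > 0, else 3t-1
    by_cases h0 : v (3*t-1) = 0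
    · refine ⟨⟨List.ofFn (fun i : Fin (3*t-1) => v i), ?_, ?_, ?_⟩, ?_⟩
      · constructor
        · rw [List.pairwise_iff_getElem]
          intro i j hi hj hij
          simp only [List.getElem_ofFn]
          exact hlt i j hij (by simp at hj; omega)
        · intro x hx
          rw [List.mem_ofFn] at hx
          obtain ⟨i, rfl⟩ := hx
          have hi : (i : ℕ) + 1 < 3*t := by omega
          have := hadj i hi
          show 0 < v (i : ℕ)
          omega
      · right; simp
      · rw [schmidt_eq _ t (by simp)]
        rw [← hv3]
        apply Finset.sum_congr rfl
        intro i hi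
        rw [Finset.mem_range] at hi
        rcases Nat.lt_or_ge (3*i) (3*t-1) with h | h
        · rw [List.getD_eq_getElem _ _ (by simp; omega)]
          simp
        · have h31 : 3*i = 3*t - 1 := by omega
          omega
      · apply Subtype.ext
        funext m
        simp only
        rcases Nat.lt_or_ge m (3*t-1) with h | h
        · rw [List.getD_eq_getElem _ _ (by simp; omega)]
          simp
        · rw [List.getD_eq_default _ _ (by simp; omega)]
          rcases Nat.lt_or_ge m (3*t) with h2 | h2
          · have : m = 3*t-1 := by omega
            rw [this, h0]
          · rw [hv2 m h2]
    · refine ⟨⟨List.ofFn (fun i : Fin (3*t) => v i), ?_, ?_, ?_⟩, ?_⟩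
      · constructor
        · rw [List.pairwise_iff_getElem]
          intro i j hi hj hij
          simp only [List.getElem_ofFn]
          exact hlt i j hij (by simp at hj; omega)
        · intro x hx
          rw [List.mem_ofFn] at hx
          obtain ⟨i, rfl⟩ := hx
          show 0 < v (i : ℕ)
          rcases Nat.lt_or_ge ((i : ℕ)+1) (3*t) with h | h
          · have := hadj i h; omega
          · have hieq : (i:ℕ) = 3*t-1 := by omega
            rw [hieq]; omega
      · left; simp
      · rw [schmidt_eq _ t (by simp)]
        rw [← hv3]
        apply Finset.sum_congr rfl
        intro i hi
        rw [Finset.mem_range] at hi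
        rw [List.getD_eq_getElem _ _ (by simp; omega)]
        simp
      · apply Subtype.ext
        funext m
        simp only
        rcases Nat.lt_or_ge m (3*t) with h | h
        · rw [List.getD_eq_getElem _ _ (by simp; omega)]
          simp
        · rw [List.getD_eq_default _ _ (by simp; omega), hv2 m h]


lemma cardB (n t : ℕ) (ht : 1 ≤ t) :
    Nat.card {p : List ℕ × List ℕ × List ℕ //
        Is2Distinct p.1 ∧ p.1.length = t ∧
        IsStrict p.2.1 ∧ p.2.1.length = t ∧
        IsPartition p.2.2 ∧ p.2.2.length ≤ t ∧
        p.1.sum + p.2.1.sum + p.2.2.sum = n} = Nat.card {v : ℕ → ℕ // Mem t n v} := by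
  symm
  apply Nat.card_eq_of_bijective (f := fun v => ⟨Phi t v.1, phi_mem t n ht v.1 v.2⟩)
  constructor
  · rintro ⟨v, hv⟩ ⟨v', hv'⟩ h
    have h1 : Phi t v = Phi t v' := congrArg Subtype.val h
    apply Subtype.ext
    calc v = Gf t (Phi t v) := (left_inv t n v hv).symm
      _ = Gf t (Phi t v') := by rw [h1]
      _ = v' := left_inv t n v' hv'
  · rintro ⟨p, hp⟩
    refine ⟨⟨Gf t p, gf_mem t n p hp ht⟩, ?_⟩
    apply Subtype.ext
    exact right_inv t n p hp ht

end SchmidtAux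

/-- Andrews–Paule: Schmidt 3-partitions of `n` with `3t` or `3t-1` parts are
equinumerous with triples `(α, β, γ)` of total weight `n` where `α` is 2-distinct of
length `t`, `β` is strict of length `t`, and `γ` is a partition of length at most `t`. -/

theorem schmidt_three (n t : ℕ) (hn : 1 ≤ n) (ht : 1 ≤ t) :
    Nat.card {l : List ℕ // IsStrict l ∧
        (l.length = 3 * t ∨ l.length = 3 * t - 1) ∧ schmidtSum 3 l = n} =
      Nat.card {p : List ℕ × List ℕ × List ℕ //
        Is2Distinct p.1 ∧ p.1.length = t ∧
        IsStrict p.2.1 ∧ p.2.1.length = t ∧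
        IsPartition p.2.2 ∧ p.2.2.length ≤ t ∧
        p.1.sum + p.2.1.sum + p.2.2.sum = n} := by
  exact (SchmidtAux.cardA n t ht).trans (SchmidtAux.cardB n t ht).symm
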